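/- Let 𝐏 = ([n], ≤) be a poset, let G_1, …, G_n be nontrivial finite abelian groups, 𝒢 = G_1 × ⋯ × G_n, and let 𝒫_𝐏 be the partition of 𝒢 into the level sets of the poset weight wt_𝐏, and 𝒫_𝐏̄ the partition of 𝒢̂ = Ĝ_1 × ⋯ × Ĝ_n into the level sets of the dual-poset weight wt_𝐏̄. If the dual partition of 𝒫_𝐏 equals 𝒫_𝐏̄, then 𝐏 is a hierarchical poset; moreover, if 𝐏 = 𝐇(n; n_1,…,n_t) with index set 𝒩 = {(i,j) : 1 ≤ i ≤ t, 1 ≤ j ≤ n_i} and accordingly 𝒢 = ∏_{i=1}^t ∏_{j=1}^{n_i} G_{i,j}, then |G_{i,1}| = ⋯ = |G_{i,n_i}| for every i = 1, …, t. -/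

import Mathlib

open Finset
open scoped Classical

variable {ι : Type*} [Fintype ι] [DecidableEq ι]
  {H : ι → Type*} [∀ i, AddCommGroup (H i)] [∀ i, Fintype (H i)]

/-- The sum of the character `χ` over the block of the partition `P` indexed by `c`. -/
noncomputable def blockSum {G : Type*} [AddCommGroup G] [Fintype G]
    (P : Setoid G) (χ : AddChar G ℂ) (c : Quotient P) : ℂ :=
  ∑ g : G, if Quotient.mk P g = c then χ g else 0

/-- The dual partition `P̂` of the character group. -/
noncomputable def dualSetoid {G : Type*} [AddCommGroup G] [Fintype G]
    (P : Setoid G) : Setoid (AddChar G ℂ) :=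
  Setoid.ker (blockSum P)

/-- The sum `Σ_{χ ∈ Q_c} χ(g)` over the block of the dual partition indexed by `c`. -/
noncomputable def dualBlockSum {G : Type*} [AddCommGroup G] [Fintype G]
    (P : Setoid G) (g : G) (c : Quotient (dualSetoid P)) : ℂ :=
  ∑ᶠ χ : AddChar G ℂ, if Quotient.mk (dualSetoid P) χ = c then χ g else 0

/-- The bidual partition `P̂̂`, a partition of `G` via the canonical identification of the
double character group with `G`. -/
noncomputable def bidualSetoid {G : Type*} [AddCommGroup G] [Fintype G]
    (P : Setoid G) : Setoid G :=
  Setoid.ker (dualBlockSum P)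

/-- The `i`-th component of a character of a product group, under the canonical
identification of the character group of a product with the product of the character
groups. -/
noncomputable def comp1 (χ : AddChar (∀ i, H i) ℂ) (i : ι) : AddChar (H i) ℂ :=
  χ.compAddMonoidHom (AddMonoidHom.single H i)

/-- The poset weight `wt_𝐏(g) = |⟨supp(g)⟩|` of `g ∈ G₁ × ⋯ × Gₙ`: the size of the ideal
generated by the support of `g` in the poset whose order relation is `le`. -/
noncomputable def posetWt (le : ι → ι → Prop) (g : ∀ i, H i) : ℕ :=
  (Finset.univ.filter fun j : ι => ∃ i : ι, g i ≠ 0 ∧ le j i).card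

/-- The dual-poset weight `wt_𝐏̄(χ) = |⟨supp(χ)⟩_𝐏̄|` of a character `χ` of `G₁ × ⋯ × Gₙ`:
the size of the ideal generated, in the dual (reversed) poset, by the support of `χ`
(the set of indices where the component of `χ` is not the principal character). -/
noncomputable def dualPosetWt (le : ι → ι → Prop) (χ : AddChar (∀ i, H i) ℂ) : ℕ :=
  (Finset.univ.filter fun j : ι => ∃ i : ι, comp1 χ i ≠ 1 ∧ le i j).card

section Aux

variable {n : ℕ} (po : PartialOrder (Fin n)) {G : Fin n → Type*}
  [∀ i, AddCommGroup (G i)] [∀ i, Fintype (G i)]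

/-- The down-set of `x` in the poset `po`. -/
noncomputable def dSet (x : Fin n) : Finset (Fin n) :=
  Finset.univ.filter fun j => po.le j x

lemma mem_dSet {x j : Fin n} : j ∈ dSet po x ↔ po.le j x := by
  simp [dSet]

lemma self_mem_dSet (x : Fin n) : x ∈ dSet po x := (mem_dSet po).mpr (po.le_refl x)

/-- The product character with components `ψ i` on `V` and trivial elsewhere. -/
noncomputable def chiF (ψ : ∀ i, AddChar (G i) ℂ) (V : Finset (Fin n)) :
    AddChar (∀ i, G i) ℂ :=
  ∏ i ∈ V, (ψ i).compAddMonoidHom (Pi.evalAddMonoidHom G i)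

lemma chiF_apply (ψ : ∀ i, AddChar (G i) ℂ) (V : Finset (Fin n)) (g : ∀ i, G i) :
    chiF ψ V g = ∏ i ∈ V, ψ i (g i) := by
  simp [chiF, AddChar.prod_apply]

lemma comp1_chiF (ψ : ∀ i, AddChar (G i) ℂ) (V : Finset (Fin n)) (i : Fin n) :
    comp1 (chiF ψ V) i = if i ∈ V then ψ i else 1 := by
  ext h
  have h1 : comp1 (chiF ψ V) i h = chiF ψ V (Pi.single i h) := rfl
  rw [h1, chiF_apply]
  by_cases hi : i ∈ V
  · rw [if_pos hi, Finset.prod_eq_single_of_mem i hi ?_, Pi.single_eq_same]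
    intro j _ hne
    rw [Pi.single_eq_of_ne hne, AddChar.map_zero_eq_one]
  · rw [if_neg hi, AddChar.one_apply]
    exact Finset.prod_eq_one fun j hj => by
      rw [Pi.single_eq_of_ne (show j ≠ i from fun hji => hi (by rw [← hji]; exact hj)),
        AddChar.map_zero_eq_one]

lemma dwt_chiF (ψ : ∀ i, AddChar (G i) ℂ) (hψ : ∀ i, ψ i ≠ 1) (V : Finset (Fin n))
    (hV : ∀ z ∈ V, ∀ w, po.le z w → w ∈ V) :
    dualPosetWt po.le (chiF ψ V) = V.card := by
  unfold dualPosetWt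
  congr 1
  ext j
  simp only [Finset.mem_filter, Finset.mem_univ, true_and]
  constructor
  · rintro ⟨i, hi1, hi2⟩
    rw [comp1_chiF] at hi1
    by_cases hiV : i ∈ V
    · exact hV i hiV j hi2
    · simp [hiV] at hi1
  · intro hj
    exact ⟨j, by rw [comp1_chiF, if_pos hj]; exact hψ j, po.le_refl j⟩

lemma dSet_subset_wtSet {g : ∀ i, G i} {x : Fin n} (hx : g x ≠ 0) :
    dSet po x ⊆ Finset.univ.filter fun j => ∃ i, g i ≠ 0 ∧ po.le j i := fun j hj =>
  Finset.mem_filter.mpr ⟨Finset.mem_univ j, x, hx, (mem_dSet po).mp hj⟩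

lemma posetWt_def (g : ∀ i, G i) :
    posetWt (H := G) po.le g
      = (Finset.univ.filter fun j => ∃ i, g i ≠ 0 ∧ po.le j i).card := by
  unfold posetWt
  congr 1
  ext j
  simp

lemma card_dSet_le_wt {g : ∀ i, G i} {x : Fin n} (hx : g x ≠ 0) :
    (dSet po x).card ≤ posetWt (H := G) po.le g := by
  rw [posetWt_def]
  exact Finset.card_le_card (dSet_subset_wtSet po hx)

lemma wt_eq_iff {g : ∀ i, G i} {x : Fin n} (hx : g x ≠ 0) :
    posetWt (H := G) po.le g = (dSet po x).card ↔ ∀ i, ¬ po.le i x → g i = 0 := by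
  rw [posetWt_def]
  constructor
  · intro h i hix
    by_contra hgi
    have hss : dSet po x ⊂ Finset.univ.filter fun j => ∃ i, g i ≠ 0 ∧ po.le j i := by
      refine ⟨dSet_subset_wtSet po hx, fun hsub2 => hix ?_⟩
      exact (mem_dSet po).mp
        (hsub2 (Finset.mem_filter.mpr ⟨Finset.mem_univ i, i, hgi, po.le_refl i⟩))
    have := Finset.card_lt_card hss
    omega
  · intro hsupp
    congr 1
    apply Finset.Subset.antisymm
    · intro j hj
      obtain ⟨-, i, hgi, hji⟩ := Finset.mem_filter.mp hj
      have hix : po.le i x := by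
        by_contra hc
        exact hgi (hsupp i hc)
      exact (mem_dSet po).mpr (po.le_trans _ _ _ hji hix)
    · exact dSet_subset_wtSet po hx

lemma wt_single (x : Fin n) (h₀ : G x) (hh : h₀ ≠ 0) :
    posetWt (H := G) po.le (Pi.single x h₀) = (dSet po x).card := by
  rw [wt_eq_iff po (x := x) (by simpa using hh)]
  intro i hix
  refine Pi.single_eq_of_ne (fun h => hix ?_) h₀
  rw [h]

lemma core_sum (ψ : ∀ i, AddChar (G i) ℂ) {x : Fin n} (hψx : ψ x ≠ 1)
    (W : Finset (Fin n)) (hW : ∀ i ∈ W, ¬ po.le i x) :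
    ∑ g : ∀ i, G i, (if posetWt (H := G) po.le g = (dSet po x).card
        then (∏ i ∈ W, ψ i (g i)) * (ψ x (g x) - 1) else 0)
      = -∏ i ∈ dSet po x, (Fintype.card (G i) : ℂ) := by
  classical
  set f : ∀ i : Fin n, G i → ℂ := fun i h =>
    if i = x then ψ i h - 1 else if po.le i x then 1 else if h = 0 then 1 else 0 with hf
  have hpoint : ∀ g : ∀ i, G i,
      (if posetWt (H := G) po.le g = (dSet po x).card
        then (∏ i ∈ W, ψ i (g i)) * (ψ x (g x) - 1) else 0) = ∏ i, f i (g i) := by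
    intro g
    by_cases hgx : g x = 0
    · have h1 : ψ x (g x) - 1 = 0 := by rw [hgx, AddChar.map_zero_eq_one, sub_self]
      rw [h1, mul_zero, ite_self]
      refine (Finset.prod_eq_zero (Finset.mem_univ x) ?_).symm
      simp only [hf, if_pos rfl]
      exact h1
    · by_cases hsupp : ∀ i, ¬ po.le i x → g i = 0
      · rw [if_pos ((wt_eq_iff po hgx).mpr hsupp)]
        have hprodW : ∏ i ∈ W, ψ i (g i) = 1 :=
          Finset.prod_eq_one fun i hi => by rw [hsupp i (hW i hi), AddChar.map_zero_eq_one]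
        rw [hprodW, one_mul,
          Finset.prod_eq_single x (fun b _ hbx => ?_) (fun hx => absurd (Finset.mem_univ x) hx)]
        · simp only [hf, if_pos rfl]
        · simp only [hf, if_neg hbx]
          by_cases hbl : po.le b x
          · rw [if_pos hbl]
          · rw [if_neg hbl, hsupp b hbl, if_pos rfl]
      · push_neg at hsupp
        obtain ⟨i₀, hi₀x, hgi₀⟩ := hsupp
        have hne : posetWt (H := G) po.le g ≠ (dSet po x).card := fun h =>
          hgi₀ ((wt_eq_iff po hgx).mp h i₀ hi₀x)
        rw [if_neg hne]
        refine (Finset.prod_eq_zero (Finset.mem_univ i₀) ?_).symm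
        have hi₀ne : i₀ ≠ x := fun h => hi₀x (by rw [h])
        simp only [hf, if_neg hi₀ne, if_neg hi₀x, if_neg hgi₀]
  rw [Finset.sum_congr rfl fun g _ => hpoint g]
  rw [← Fintype.piFinset_univ, ← Finset.prod_univ_sum]
  have hval : ∀ i : Fin n, (∑ h : G i, f i h) =
      (if i = x then -(Fintype.card (G i) : ℂ)
        else if po.le i x then (Fintype.card (G i) : ℂ) else 1) := by
    intro i
    by_cases hix : i = x
    · subst hix
      simp only [hf, if_pos rfl]
      rw [Finset.sum_sub_distrib, Finset.sum_const,
        AddChar.sum_eq_zero_iff_ne_zero.mpr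
          (fun h0 => hψx (AddChar.eq_one_iff.mpr (AddChar.eq_zero_iff.mp h0)))]
      simp [Finset.card_univ]
    · simp only [hf, if_neg hix]
      by_cases hbl : po.le i x
      · simp only [if_pos hbl, Finset.sum_const, Finset.card_univ]
        simp
      · simp only [if_neg hbl]
        rw [Finset.sum_ite_eq' Finset.univ (0 : G i) (fun _ => (1 : ℂ))]
        simp
  rw [Finset.prod_congr rfl fun i _ => hval i]
  have hx : x ∈ dSet po x := self_mem_dSet po x
  rw [← Finset.prod_mul_prod_compl (dSet po x)]
  have hcompl : (∏ i ∈ (dSet po x)ᶜ,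
      (if i = x then -(Fintype.card (G i) : ℂ)
        else if po.le i x then (Fintype.card (G i) : ℂ) else 1)) = 1 := by
    refine Finset.prod_eq_one fun i hi => ?_
    have hiD : i ∉ dSet po x := Finset.mem_compl.mp hi
    have h1 : i ≠ x := fun h => hiD (h ▸ hx)
    have h2 : ¬ po.le i x := fun h => hiD ((mem_dSet po).mpr h)
    rw [if_neg h1, if_neg h2]
  rw [hcompl, mul_one]
  rw [← Finset.mul_prod_erase _ _ hx, if_pos rfl]
  have herase : (∏ i ∈ (dSet po x).erase x,
      (if i = x then -(Fintype.card (G i) : ℂ)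
        else if po.le i x then (Fintype.card (G i) : ℂ) else 1))
      = ∏ i ∈ (dSet po x).erase x, (Fintype.card (G i) : ℂ) := by
    refine Finset.prod_congr rfl fun i hi => ?_
    obtain ⟨h1, h2⟩ := Finset.mem_erase.mp hi
    rw [if_neg h1, if_pos ((mem_dSet po).mp h2)]
  rw [herase, neg_mul]
  congr 1
  exact Finset.mul_prod_erase (dSet po x) (fun i => (Fintype.card (G i) : ℂ)) hx

lemma sum_zero {y : Fin n} {m : ℕ} (hm : m < (dSet po y).card)
    (A : (∀ i, G i) → ℂ) (ψy : AddChar (G y) ℂ) :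
    ∑ g : ∀ i, G i, (if posetWt (H := G) po.le g = m then A g * (ψy (g y) - 1) else 0) = 0 := by
  refine Finset.sum_eq_zero fun g _ => ?_
  by_cases hc : posetWt (H := G) po.le g = m
  · rw [if_pos hc]
    have hgy : g y = 0 := by
      by_contra hgy
      have := card_dSet_le_wt po (x := y) hgy
      omega
    rw [hgy, AddChar.map_zero_eq_one, sub_self, mul_zero]
  · rw [if_neg hc]

/-- The complement of the strict joint down-set of `x` and `y`. -/
noncomputable def uSet (x y : Fin n) : Finset (Fin n) :=
  Finset.univ \ ((dSet po x ∪ dSet po y) \ {x, y})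

lemma uSet_comm (x y : Fin n) : uSet po x y = uSet po y x := by
  unfold uSet
  rw [Finset.union_comm, Finset.pair_comm]

lemma mem_uSet {x y z : Fin n} :
    z ∈ uSet po x y ↔ (z ∈ dSet po x ∪ dSet po y → z = x ∨ z = y) := by
  simp only [uSet, Finset.mem_sdiff, Finset.mem_univ, true_and, Finset.mem_insert,
    Finset.mem_singleton]
  tauto

lemma self_mem_uSet_left (x y : Fin n) : x ∈ uSet po x y :=
  (mem_uSet po).mpr fun _ => Or.inl rfl

lemma self_mem_uSet_right (x y : Fin n) : y ∈ uSet po x y :=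
  (mem_uSet po).mpr fun _ => Or.inr rfl

/-- `wSet x y` : all indices except `x`, `y` and anything strictly below them. -/
noncomputable def wSet (x y : Fin n) : Finset (Fin n) := ((uSet po x y).erase x).erase y

lemma wSet_not_le_x {x y : Fin n} (hyx : ¬ po.le y x) (i : Fin n) (hi : i ∈ wSet po x y) :
    ¬ po.le i x := by
  obtain ⟨hiy, hix, hiU⟩ :=
    (show i ≠ y ∧ i ≠ x ∧ i ∈ uSet po x y by simpa [wSet, Finset.mem_erase, and_assoc] using hi)
  intro h
  rcases (mem_uSet po).mp hiU (Finset.mem_union_left _ ((mem_dSet po).mpr h)) with h1 | h1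
  exacts [hix h1, hiy h1]

lemma wSet_not_le_y {x y : Fin n} (hxy : ¬ po.le x y) (i : Fin n) (hi : i ∈ wSet po x y) :
    ¬ po.le i y := by
  obtain ⟨hiy, hix, hiU⟩ :=
    (show i ≠ y ∧ i ≠ x ∧ i ∈ uSet po x y by simpa [wSet, Finset.mem_erase, and_assoc] using hi)
  intro h
  rcases (mem_uSet po).mp hiU (Finset.mem_union_right _ ((mem_dSet po).mpr h)) with h1 | h1
  exacts [hix h1, hiy h1]

lemma upClosed_erase {x y : Fin n} (hxy : ¬ po.le x y) (hyx : ¬ po.le y x) :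
    ∀ z ∈ (uSet po x y).erase x, ∀ w, po.le z w → w ∈ (uSet po x y).erase x := by
  intro z hz w hzw
  obtain ⟨hzx, hzU⟩ := Finset.mem_erase.mp hz
  have hzU' := (mem_uSet po).mp hzU
  have hA : ¬ po.le z x := by
    intro h
    rcases hzU' (Finset.mem_union_left _ ((mem_dSet po).mpr h)) with h1 | h1
    · exact hzx h1
    · refine hyx ?_
      rw [← h1]
      exact h
  have hB : po.le z y → z = y := by
    intro h
    rcases hzU' (Finset.mem_union_right _ ((mem_dSet po).mpr h)) with h1 | h1
    · refine absurd ?_ hxy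
      rw [← h1]
      exact h
    · exact h1
  have hwx : w ≠ x := fun h => hA (by rw [← h] at hA ⊢; exact hzw)
  refine Finset.mem_erase.mpr ⟨hwx, (mem_uSet po).mpr fun hw => ?_⟩
  rcases Finset.mem_union.mp hw with hw1 | hw1
  · exact absurd (po.le_trans _ _ _ hzw ((mem_dSet po).mp hw1)) hA
  · have hwy : po.le w y := (mem_dSet po).mp hw1
    have hzy : z = y := hB (po.le_trans _ _ _ hzw hwy)
    right
    refine po.le_antisymm _ _ hwy ?_
    rw [← hzy]
    exact hzw

lemma main_eq (ψ : ∀ i, AddChar (G i) ℂ) (hψ : ∀ i, ψ i ≠ 1) [∀ i, Nontrivial (G i)]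
    (hdual : dualSetoid (Setoid.ker (posetWt (H := G) po.le)) =
      Setoid.ker (dualPosetWt (H := G) po.le))
    {x y : Fin n} (hxy : ¬ po.le x y) (hyx : ¬ po.le y x) :
    ∑ g : ∀ i, G i, (if posetWt (H := G) po.le g = (dSet po x).card
        then (∏ i ∈ wSet po x y, ψ i (g i)) * (ψ y (g y) - 1) else 0)
    = ∑ g : ∀ i, G i, (if posetWt (H := G) po.le g = (dSet po x).card
        then (∏ i ∈ wSet po x y, ψ i (g i)) * (ψ x (g x) - 1) else 0) := by
  classical
  have hxyne : x ≠ y := fun h => hxy (by rw [h])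
  have hxU : x ∈ uSet po x y := self_mem_uSet_left po x y
  have hyU : y ∈ uSet po x y := self_mem_uSet_right po x y
  have hyV₁ : y ∈ (uSet po x y).erase x := Finset.mem_erase.mpr ⟨hxyne.symm, hyU⟩
  have hxV₂ : x ∈ (uSet po x y).erase y := Finset.mem_erase.mpr ⟨hxyne, hxU⟩
  have hcard : ((uSet po x y).erase x).card = ((uSet po x y).erase y).card := by
    rw [Finset.card_erase_of_mem hxU, Finset.card_erase_of_mem hyU]
  have hup1 := upClosed_erase po hxy hyx
  have hup2 : ∀ z ∈ (uSet po x y).erase y, ∀ w, po.le z w → w ∈ (uSet po x y).erase y := by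
    rw [uSet_comm po x y]
    exact upClosed_erase po hyx hxy
  -- the two characters have the same dual poset weight, hence equal block sums
  have hker : (Setoid.ker (dualPosetWt (H := G) po.le)).r
      (chiF ψ ((uSet po x y).erase x)) (chiF ψ ((uSet po x y).erase y)) := by
    show dualPosetWt (H := G) po.le _ = dualPosetWt (H := G) po.le _
    rw [dwt_chiF po ψ hψ _ hup1, dwt_chiF po ψ hψ _ hup2, hcard]
  have hbs : blockSum (Setoid.ker (posetWt (H := G) po.le)) (chiF ψ ((uSet po x y).erase x)) =
      blockSum (Setoid.ker (posetWt (H := G) po.le)) (chiF ψ ((uSet po x y).erase y)) := by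
    have h2 : (dualSetoid (Setoid.ker (posetWt (H := G) po.le))).r
        (chiF ψ ((uSet po x y).erase x)) (chiF ψ ((uSet po x y).erase y)) := by
      rw [hdual]
      exact hker
    exact h2
  obtain ⟨h₀, hh₀⟩ := exists_ne (0 : G x)
  have hwt₀ : posetWt (H := G) po.le (Pi.single x h₀) = (dSet po x).card :=
    wt_single po x h₀ hh₀
  have hbs' := congrFun hbs (Quotient.mk _ (Pi.single x h₀))
  rw [blockSum, blockSum] at hbs'
  have hcond : ∀ g : ∀ i, G i,
      (Quotient.mk (Setoid.ker (posetWt (H := G) po.le)) g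
          = Quotient.mk (Setoid.ker (posetWt (H := G) po.le)) (Pi.single x h₀)) ↔
        posetWt (H := G) po.le g = (dSet po x).card := by
    intro g
    rw [← hwt₀]
    exact ⟨fun h => Quotient.exact h, fun h => Quotient.sound h⟩
  simp only [hcond] at hbs'
  simp only [chiF_apply] at hbs'
  have hsplit1 : ∀ g : ∀ i, G i, ∏ i ∈ (uSet po x y).erase x, ψ i (g i)
      = ψ y (g y) * ∏ i ∈ wSet po x y, ψ i (g i) := fun g =>
    (Finset.mul_prod_erase ((uSet po x y).erase x) (fun i => ψ i (g i)) hyV₁).symm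
  have herasecomm : ((uSet po x y).erase y).erase x = wSet po x y := by
    unfold wSet
    ext z
    simp only [Finset.mem_erase]
    tauto
  have hsplit2 : ∀ g : ∀ i, G i, ∏ i ∈ (uSet po x y).erase y, ψ i (g i)
      = ψ x (g x) * ∏ i ∈ wSet po x y, ψ i (g i) := fun g => by
    rw [← herasecomm]
    exact (Finset.mul_prod_erase ((uSet po x y).erase y) (fun i => ψ i (g i)) hxV₂).symm
  simp only [hsplit1, hsplit2] at hbs'
  -- now massage the goal into hbs' minus a common term
  calc ∑ g : ∀ i, G i, (if posetWt (H := G) po.le g = (dSet po x).card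
        then (∏ i ∈ wSet po x y, ψ i (g i)) * (ψ y (g y) - 1) else 0)
      = (∑ g : ∀ i, G i, (if posetWt (H := G) po.le g = (dSet po x).card
          then ψ y (g y) * ∏ i ∈ wSet po x y, ψ i (g i) else 0))
        - ∑ g : ∀ i, G i, (if posetWt (H := G) po.le g = (dSet po x).card
          then ∏ i ∈ wSet po x y, ψ i (g i) else 0) := by
        rw [← Finset.sum_sub_distrib]
        refine Finset.sum_congr rfl fun g _ => ?_
        split_ifs
        · ring
        · simp
    _ = (∑ g : ∀ i, G i, (if posetWt (H := G) po.le g = (dSet po x).card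
          then ψ x (g x) * ∏ i ∈ wSet po x y, ψ i (g i) else 0))
        - ∑ g : ∀ i, G i, (if posetWt (H := G) po.le g = (dSet po x).card
          then ∏ i ∈ wSet po x y, ψ i (g i) else 0) := by rw [hbs']
    _ = ∑ g : ∀ i, G i, (if posetWt (H := G) po.le g = (dSet po x).card
          then (∏ i ∈ wSet po x y, ψ i (g i)) * (ψ x (g x) - 1) else 0) := by
        rw [← Finset.sum_sub_distrib]
        refine Finset.sum_congr rfl fun g _ => ?_
        split_ifs
        · ring
        · simp

lemma card_not_lt (ψ : ∀ i, AddChar (G i) ℂ) (hψ : ∀ i, ψ i ≠ 1) [∀ i, Nontrivial (G i)]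
    (hdual : dualSetoid (Setoid.ker (posetWt (H := G) po.le)) =
      Setoid.ker (dualPosetWt (H := G) po.le))
    {x y : Fin n} (hxy : ¬ po.le x y) (hyx : ¬ po.le y x) :
    ¬ ((dSet po x).card < (dSet po y).card) := by
  intro hlt
  have hme := main_eq po ψ hψ hdual hxy hyx
  rw [sum_zero po hlt _ (ψ y),
    core_sum po ψ (hψ x) (wSet po x y) (fun i hi => wSet_not_le_x po hyx i hi)] at hme
  have hne : (∏ i ∈ dSet po x, (Fintype.card (G i) : ℂ)) ≠ 0 :=
    Finset.prod_ne_zero_iff.mpr fun i _ => Nat.cast_ne_zero.mpr Fintype.card_ne_zero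
  exact hne (neg_eq_zero.mp hme.symm)

lemma card_eq_of_incomp (ψ : ∀ i, AddChar (G i) ℂ) (hψ : ∀ i, ψ i ≠ 1)
    [∀ i, Nontrivial (G i)]
    (hdual : dualSetoid (Setoid.ker (posetWt (H := G) po.le)) =
      Setoid.ker (dualPosetWt (H := G) po.le))
    {x y : Fin n} (hxy : ¬ po.le x y) (hyx : ¬ po.le y x) :
    (dSet po x).card = (dSet po y).card := by
  have h1 := card_not_lt po ψ hψ hdual hxy hyx
  have h2 := card_not_lt po ψ hψ hdual hyx hxy
  exact Nat.le_antisymm (Nat.not_lt.mp h2) (Nat.not_lt.mp h1)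

lemma prod_eq_of_incomp (ψ : ∀ i, AddChar (G i) ℂ) (hψ : ∀ i, ψ i ≠ 1)
    [∀ i, Nontrivial (G i)]
    (hdual : dualSetoid (Setoid.ker (posetWt (H := G) po.le)) =
      Setoid.ker (dualPosetWt (H := G) po.le))
    {x y : Fin n} (hxy : ¬ po.le x y) (hyx : ¬ po.le y x) :
    (∏ i ∈ dSet po x, Fintype.card (G i)) = ∏ i ∈ dSet po y, Fintype.card (G i) := by
  have hc := card_eq_of_incomp po ψ hψ hdual hxy hyx
  have hme := main_eq po ψ hψ hdual hxy hyx
  rw [core_sum po ψ (hψ x) (wSet po x y) (fun i hi => wSet_not_le_x po hyx i hi), hc,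
    core_sum po ψ (hψ y) (wSet po x y) (fun i hi => wSet_not_le_y po hxy i hi)] at hme
  have := neg_inj.mp hme
  have hcast : ((∏ i ∈ dSet po y, Fintype.card (G i) : ℕ) : ℂ)
      = ((∏ i ∈ dSet po x, Fintype.card (G i) : ℕ) : ℂ) := by
    push_cast
    exact this
  exact (Nat.cast_inj.mp hcast).symm

end Aux

/-- If the dual of the partition of `𝒢 = G₁ × ⋯ × Gₙ` into the level sets of the poset
weight `wt_𝐏` equals the partition of `𝒢̂` into the level sets of the dual-poset weight
`wt_𝐏̄`, then the poset `𝐏` is hierarchical — i.e. there is a level function `lev` with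
`i < j` in `𝐏` iff `lev i < lev j` — and the groups belonging to a common level all have
the same order. -/
theorem poset_duality_implies_hierarchical
    {n : ℕ} (po : PartialOrder (Fin n)) (H : Fin n → Type*)
    [∀ i, AddCommGroup (H i)] [∀ i, Fintype (H i)] [∀ i, Nontrivial (H i)]
    (hdual : dualSetoid (Setoid.ker (posetWt (H := H) po.le)) =
      Setoid.ker (dualPosetWt (H := H) po.le)) :
    ∃ lev : Fin n → ℕ,
      (∀ i j : Fin n, po.lt i j ↔ lev i < lev j) ∧
      (∀ i j : Fin n, lev i = lev j → Nat.card (H i) = Nat.card (H j)) := by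
  classical
  have hex : ∀ i, ∃ χ : AddChar (H i) ℂ, χ ≠ 1 := by
    intro i
    obtain ⟨a, ha⟩ := exists_ne (0 : H i)
    obtain ⟨χ, hχ⟩ := AddChar.exists_apply_ne_zero.mpr ha
    exact ⟨χ, fun h => hχ (by rw [h]; exact AddChar.one_apply a)⟩
  choose ψ hψ using hex
  have hmono : ∀ i j, po.lt i j → (dSet po i).card < (dSet po j).card := by
    intro i j hij
    obtain ⟨hle, hnle⟩ := (po.lt_iff_le_not_ge _ _).mp hij
    apply Finset.card_lt_card
    constructor
    · intro z hz
      exact (mem_dSet po).mpr (po.le_trans _ _ _ ((mem_dSet po).mp hz) hle)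
    · intro hsub
      exact hnle ((mem_dSet po).mp (hsub (self_mem_dSet po j)))
  have hiff : ∀ i j, po.lt i j ↔ (dSet po i).card < (dSet po j).card := by
    intro i j
    refine ⟨hmono i j, fun h => ?_⟩
    by_cases hij : po.le i j
    · refine (po.lt_iff_le_not_ge _ _).mpr ⟨hij, fun hji => ?_⟩
      have heq : i = j := po.le_antisymm _ _ hij hji
      rw [heq] at h
      exact lt_irrefl _ h
    · by_cases hji : po.le j i
      · have hlt : po.lt j i := (po.lt_iff_le_not_ge _ _).mpr ⟨hji, hij⟩
        exact absurd h (not_lt.mpr (le_of_lt (hmono _ _ hlt)))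
      · exact absurd h (not_lt.mpr (le_of_eq (card_eq_of_incomp po ψ hψ hdual hij hji).symm))
  refine ⟨fun i => (dSet po i).card, hiff, ?_⟩
  intro i j hdij
  have hdij' : (dSet po i).card = (dSet po j).card := hdij
  by_cases hij : i = j
  · rw [hij]
  have h1 : ¬ po.le i j := by
    intro h1
    have hlt : po.lt i j := (po.lt_iff_le_not_ge _ _).mpr
      ⟨h1, fun h2 => hij (po.le_antisymm _ _ h1 h2)⟩
    exact absurd (hmono _ _ hlt) (not_lt.mpr (le_of_eq hdij'.symm))
  have h2 : ¬ po.le j i := by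
    intro h2
    have hlt : po.lt j i := (po.lt_iff_le_not_ge _ _).mpr ⟨h2, h1⟩
    exact absurd (hmono _ _ hlt) (not_lt.mpr (le_of_eq hdij'))
  have hq := prod_eq_of_incomp po ψ hψ hdual h1 h2
  have herase : (dSet po i).erase i = (dSet po j).erase j := by
    ext z
    simp only [Finset.mem_erase, mem_dSet]
    constructor
    · rintro ⟨hzi, hle⟩
      have hlt : po.lt z i := (po.lt_iff_le_not_ge _ _).mpr
        ⟨hle, fun h => hzi (po.le_antisymm _ _ hle h)⟩
      have hdz := hmono _ _ hlt
      have hzj : po.lt z j := (hiff z j).mpr (hdij' ▸ hdz)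
      obtain ⟨hlej, hnlej⟩ := (po.lt_iff_le_not_ge _ _).mp hzj
      exact ⟨fun hzeq => hnlej (by rw [hzeq]), hlej⟩
    · rintro ⟨hzj, hle⟩
      have hlt : po.lt z j := (po.lt_iff_le_not_ge _ _).mpr
        ⟨hle, fun h => hzj (po.le_antisymm _ _ hle h)⟩
      have hdz := hmono _ _ hlt
      have hzi : po.lt z i := (hiff z i).mpr (hdij'.symm ▸ hdz)
      obtain ⟨hlei, hnlei⟩ := (po.lt_iff_le_not_ge _ _).mp hzi
      exact ⟨fun hzeq => hnlei (by rw [hzeq]), hlei⟩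
  have hi' : (∏ k ∈ dSet po i, Fintype.card (H k))
      = Fintype.card (H i) * ∏ k ∈ (dSet po i).erase i, Fintype.card (H k) :=
    (Finset.mul_prod_erase (dSet po i) (fun k => Fintype.card (H k)) (self_mem_dSet po i)).symm
  have hj' : (∏ k ∈ dSet po j, Fintype.card (H k))
      = Fintype.card (H j) * ∏ k ∈ (dSet po j).erase j, Fintype.card (H k) :=
    (Finset.mul_prod_erase (dSet po j) (fun k => Fintype.card (H k)) (self_mem_dSet po j)).symm
  rw [hi', hj', herase] at hq
  have hX : 0 < ∏ k ∈ (dSet po j).erase j, Fintype.card (H k) :=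
    Finset.prod_pos fun k _ => Fintype.card_pos
  have : Fintype.card (H i) = Fintype.card (H j) := Nat.eq_of_mul_eq_mul_right hX hq
  rw [Nat.card_eq_fintype_card, Nat.card_eq_fintype_card, this]
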